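/- Let h : ℝ → ℝ be continuously differentiable, L > 0, and let V : [0, L] → ℝ be a non-constant function which is continuously differentiable on [0, L] and twice differentiable on (0, L), and which satisfies V''(x) + h(V(x)) = 0 for all x ∈ (0, L) and V'(0) = V'(L) = 0. Then there exist x₀ ∈ [0, L] and a₀ ∈ ℝ such that V(x₀) = a₀, h(a₀) = 0, and h'(a₀) ≥ 0. -/

import Mathlib

open Set Filter Topology


lemma signChange (h : ℝ → ℝ) (hc : Continuous h) (hd : Differentiable ℝ h)
    (a b : ℝ) (hab : a < b) (ha : h a ≤ 0) (hb : 0 ≤ h b) :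
    ∃ a₀ ∈ Icc a b, h a₀ = 0 ∧ 0 ≤ deriv h a₀ := by
  by_cases hex : ∃ c ∈ Icc a b, 0 < h c
  · obtain ⟨c, hcmem, hc0⟩ := hex
    have hac : a ≤ c := hcmem.1
    set S : Set ℝ := Icc a c ∩ {v | h v ≤ 0} with hS
    have hSa : a ∈ S := ⟨⟨le_refl a, hac⟩, ha⟩
    have hSne : S.Nonempty := ⟨a, hSa⟩
    have hScl : IsClosed S := isClosed_Icc.inter (isClosed_le hc continuous_const)
    have hSbdd : BddAbove S := ⟨c, fun v hv => hv.1.2⟩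
    set a₀ := sSup S with ha₀
    have hmem : a₀ ∈ S := hScl.csSup_mem hSne hSbdd
    have haa₀ : a ≤ a₀ := le_csSup hSbdd hSa
    have ha₀c : a₀ < c := lt_of_le_of_ne hmem.1.2 (fun he => by
      rw [he] at hmem; exact absurd hmem.2 (not_le.2 hc0))
    have hpos : ∀ v, a₀ < v → v < c → 0 < h v := by
      intro v hv1 hv2
      by_contra hn
      have : v ∈ S := ⟨⟨le_trans haa₀ hv1.le, hv2.le⟩, not_lt.1 hn⟩
      exact absurd (le_csSup hSbdd this) (not_le.2 hv1)
    have hIoo : Ioo a₀ c ∈ 𝓝[>] a₀ := Ioo_mem_nhdsGT_of_mem ⟨le_refl _, ha₀c⟩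
    have hzero : h a₀ = 0 := by
      have htend : Tendsto h (𝓝[>] a₀) (𝓝 (h a₀)) :=
        (hc.tendsto a₀).mono_left nhdsWithin_le_nhds
      have : 0 ≤ h a₀ := ge_of_tendsto htend (by
        filter_upwards [hIoo] with v hv
        exact (hpos v hv.1 hv.2).le)
      have hle : h a₀ ≤ 0 := hmem.2
      linarith
    refine ⟨a₀, ⟨haa₀, le_trans ha₀c.le hcmem.2⟩, hzero, ?_⟩
    have hslope : Tendsto (slope h a₀) (𝓝[≠] a₀) (𝓝 (deriv h a₀)) :=
      hasDerivAt_iff_tendsto_slope.1 (hd a₀).hasDerivAt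
    have hslope' : Tendsto (slope h a₀) (𝓝[>] a₀) (𝓝 (deriv h a₀)) :=
      hslope.mono_left (nhdsWithin_mono _ (fun v hv => ne_of_gt hv))
    refine ge_of_tendsto hslope' ?_
    filter_upwards [hIoo] with v hv
    rw [slope_def_field, hzero]
    have h1 : 0 < h v := hpos v hv.1 hv.2
    have h2 : (0:ℝ) < v - a₀ := by linarith [hv.1]
    exact div_nonneg (by linarith) h2.le
  · push_neg at hex
    have hb0 : h b = 0 := le_antisymm (hex b ⟨hab.le, le_refl b⟩) hb
    refine ⟨b, ⟨hab.le, le_refl b⟩, hb0, ?_⟩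
    have hslope : Tendsto (slope h b) (𝓝[≠] b) (𝓝 (deriv h b)) :=
      hasDerivAt_iff_tendsto_slope.1 (hd b).hasDerivAt
    have hslope' : Tendsto (slope h b) (𝓝[<] b) (𝓝 (deriv h b)) :=
      hslope.mono_left (nhdsWithin_mono _ (fun v hv => ne_of_lt hv))
    refine ge_of_tendsto hslope' ?_
    filter_upwards [Ioo_mem_nhdsLT_of_mem ⟨hab, le_refl b⟩] with v hv
    rw [slope_def_field, hb0]
    have h1 : h v ≤ 0 := hex v ⟨hv.1.le, hv.2.le⟩
    have h2 : v - b < 0 := by linarith [hv.2]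
    exact div_nonneg_of_nonpos (by linarith : h v - 0 ≤ 0) h2.le

lemma pushRight (h V V' V'' : ℝ → ℝ) (L : ℝ)
    (hVcont : ContinuousOn V (Icc 0 L)) (hhc : Continuous h)
    (hV'c : ContinuousOn V' (Icc 0 L))
    (hV'' : ∀ x ∈ Ioo 0 L, HasDerivAt V' (V'' x) x)
    (heq : ∀ x ∈ Ioo 0 L, V'' x + h (V x) = 0)
    (t u : ℝ) (ht0L : t ∈ Icc 0 L) (huL : u ≤ L) (htu : t < u)
    (ht0 : V' t = 0) (hne : h (V t) ≠ 0) :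
    ∃ s ∈ Ioo t u, V' s * h (V t) < 0 := by
  have hcomp : ContinuousOn (fun x => h (V x)) (Icc 0 L) := hhc.comp_continuousOn hVcont
  have hct : ContinuousWithinAt (fun x => h (V x)) (Icc 0 L) t := hcomp t ht0L
  have hε : (0:ℝ) < |h (V t)| := abs_pos.2 hne
  obtain ⟨δ, hδ, hδ'⟩ := Metric.continuousWithinAt_iff.1 hct _ hε
  set γ := min (t + δ/2) ((t+u)/2) with hγ
  have htγ : t < γ := lt_min (by linarith) (by linarith)
  have hγu : γ < u := lt_of_le_of_lt (min_le_right _ _) (by linarith)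
  have hγL : γ ∈ Icc 0 L := ⟨le_trans ht0L.1 htγ.le, le_trans hγu.le huL⟩
  have hsub : Icc t γ ⊆ Icc 0 L := fun x hx => ⟨le_trans ht0L.1 hx.1, le_trans hx.2 hγL.2⟩
  have hsame : ∀ x ∈ Icc t γ, |h (V x) - h (V t)| < |h (V t)| := by
    intro x hx
    have hd : dist x t < δ := by
      rw [Real.dist_eq, abs_of_nonneg (by linarith [hx.1])]
      have := hx.2
      have : x ≤ t + δ/2 := le_trans this (le_trans (min_le_left _ _) (le_refl _))
      linarith
    simpa [Real.dist_eq] using hδ' (hsub hx) hd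
  have hIoosub : Ioo t γ ⊆ Ioo 0 L := fun x hx =>
    ⟨lt_of_le_of_lt ht0L.1 hx.1, lt_of_lt_of_le hx.2 (le_trans hγu.le huL)⟩
  have hderiv : ∀ x ∈ Ioo t γ, deriv V' x = - h (V x) := by
    intro x hx
    have hx' := hIoosub hx
    rw [(hV'' x hx').deriv]
    linarith [heq x hx']
  have hV'cont : ContinuousOn V' (Icc t γ) := hV'c.mono hsub
  rcases hne.lt_or_gt with hneg | hpos
  · -- h (V t) < 0 : V' increasing, V' γ > 0
    have hmono : StrictMonoOn V' (Icc t γ) := by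
      apply strictMonoOn_of_deriv_pos (convex_Icc t γ) hV'cont
      intro x hx
      rw [interior_Icc] at hx
      rw [hderiv x hx]
      have := hsame x ⟨hx.1.le, hx.2.le⟩
      rw [abs_of_neg hneg] at this
      have := abs_lt.1 this
      linarith [this.1]
    have : V' t < V' γ := hmono ⟨le_refl t, htγ.le⟩ ⟨htγ.le, le_refl γ⟩ htγ
    rw [ht0] at this
    exact ⟨γ, ⟨htγ, hγu⟩, mul_neg_of_pos_of_neg this hneg⟩
  · -- h (V t) > 0 : V' decreasing, V' γ < 0
    have hanti : StrictAntiOn V' (Icc t γ) := by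
      apply strictAntiOn_of_deriv_neg (convex_Icc t γ) hV'cont
      intro x hx
      rw [interior_Icc] at hx
      rw [hderiv x hx]
      have := hsame x ⟨hx.1.le, hx.2.le⟩
      rw [abs_of_pos hpos] at this
      have := abs_lt.1 this
      linarith [this.1]
    have : V' γ < V' t := hanti ⟨le_refl t, htγ.le⟩ ⟨htγ.le, le_refl γ⟩ htγ
    rw [ht0] at this
    exact ⟨γ, ⟨htγ, hγu⟩, mul_neg_of_neg_of_pos this hpos⟩

lemma pushLeft (h V V' V'' : ℝ → ℝ) (L : ℝ)
    (hVcont : ContinuousOn V (Icc 0 L)) (hhc : Continuous h)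
    (hV'c : ContinuousOn V' (Icc 0 L))
    (hV'' : ∀ x ∈ Ioo 0 L, HasDerivAt V' (V'' x) x)
    (heq : ∀ x ∈ Ioo 0 L, V'' x + h (V x) = 0)
    (t u : ℝ) (ht0L : t ∈ Icc 0 L) (hu0 : 0 ≤ u) (htu : u < t)
    (ht0 : V' t = 0) (hne : h (V t) ≠ 0) :
    ∃ s ∈ Ioo u t, 0 < V' s * h (V t) := by
  have hcomp : ContinuousOn (fun x => h (V x)) (Icc 0 L) := hhc.comp_continuousOn hVcont
  have hct : ContinuousWithinAt (fun x => h (V x)) (Icc 0 L) t := hcomp t ht0L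
  have hε : (0:ℝ) < |h (V t)| := abs_pos.2 hne
  obtain ⟨δ, hδ, hδ'⟩ := Metric.continuousWithinAt_iff.1 hct _ hε
  set γ := max (t - δ/2) ((u+t)/2) with hγ
  have htγ : γ < t := max_lt (by linarith) (by linarith)
  have hγu : u < γ := lt_of_lt_of_le (by linarith) (le_max_right _ _)
  have hγL : γ ∈ Icc 0 L := ⟨le_trans hu0 hγu.le, le_trans htγ.le ht0L.2⟩
  have hsub : Icc γ t ⊆ Icc 0 L := fun x hx => ⟨le_trans hγL.1 hx.1, le_trans hx.2 ht0L.2⟩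
  have hsame : ∀ x ∈ Icc γ t, |h (V x) - h (V t)| < |h (V t)| := by
    intro x hx
    have hd : dist x t < δ := by
      rw [Real.dist_eq, abs_of_nonpos (by linarith [hx.2])]
      have h1 : t - δ/2 ≤ x := le_trans (le_max_left _ _) hx.1
      linarith
    simpa [Real.dist_eq] using hδ' (hsub hx) hd
  have hIoosub : Ioo γ t ⊆ Ioo 0 L := fun x hx =>
    ⟨lt_of_le_of_lt hγL.1 hx.1, lt_of_lt_of_le hx.2 ht0L.2⟩
  have hderiv : ∀ x ∈ Ioo γ t, deriv V' x = - h (V x) := by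
    intro x hx
    have hx' := hIoosub hx
    rw [(hV'' x hx').deriv]
    linarith [heq x hx']
  have hV'cont : ContinuousOn V' (Icc γ t) := hV'c.mono hsub
  rcases hne.lt_or_gt with hneg | hpos
  · -- h (V t) < 0 : V' increasing, V' γ < V' t = 0
    have hmono : StrictMonoOn V' (Icc γ t) := by
      apply strictMonoOn_of_deriv_pos (convex_Icc γ t) hV'cont
      intro x hx
      rw [interior_Icc] at hx
      rw [hderiv x hx]
      have := hsame x ⟨hx.1.le, hx.2.le⟩
      rw [abs_of_neg hneg] at this
      have := abs_lt.1 this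
      linarith [this.1]
    have : V' γ < V' t := hmono ⟨le_refl γ, htγ.le⟩ ⟨htγ.le, le_refl t⟩ htγ
    rw [ht0] at this
    exact ⟨γ, ⟨hγu, htγ⟩, mul_pos_of_neg_of_neg this hneg⟩
  · -- h (V t) > 0 : V' decreasing, V' γ > V' t = 0
    have hanti : StrictAntiOn V' (Icc γ t) := by
      apply strictAntiOn_of_deriv_neg (convex_Icc γ t) hV'cont
      intro x hx
      rw [interior_Icc] at hx
      rw [hderiv x hx]
      have := hsame x ⟨hx.1.le, hx.2.le⟩
      rw [abs_of_pos hpos] at this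
      have := abs_lt.1 this
      linarith [this.1]
    have : V' t < V' γ := hanti ⟨le_refl γ, htγ.le⟩ ⟨htγ.le, le_refl t⟩ htγ
    rw [ht0] at this
    exact ⟨γ, ⟨hγu, htγ⟩, mul_pos this hpos⟩

/-- Lemma: for a non-constant solution of the 1D Neumann problem V'' + h(V) = 0,
there is a point x₀ and a value a₀ = V(x₀) with h(a₀) = 0 and h'(a₀) ≥ 0. -/
theorem stmt_1
    (h : ℝ → ℝ) (hh : ContDiff ℝ 1 h)
    (L : ℝ) (hL : 0 < L)
    (V V' V'' : ℝ → ℝ)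
    (hVnc : ¬ ∃ c : ℝ, ∀ x ∈ Icc 0 L, V x = c)
    (hV' : ∀ x ∈ Icc 0 L, HasDerivWithinAt V (V' x) (Icc 0 L) x)
    (hV'c : ContinuousOn V' (Icc 0 L))
    (hV'' : ∀ x ∈ Ioo 0 L, HasDerivAt V' (V'' x) x)
    (heq : ∀ x ∈ Ioo 0 L, V'' x + h (V x) = 0)
    (hN0 : V' 0 = 0) (hNL : V' L = 0) :
    ∃ x₀ ∈ Icc 0 L, ∃ a₀ : ℝ, V x₀ = a₀ ∧ h a₀ = 0 ∧ deriv h a₀ ≥ 0 := by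
  have hhc : Continuous h := hh.continuous
  have hhd : Differentiable ℝ h := hh.differentiable one_ne_zero
  have hVcont : ContinuousOn V (Icc 0 L) := fun x hx => (hV' x hx).continuousWithinAt
  -- there is a point where V' ≠ 0
  have hcex : ∃ c ∈ Icc 0 L, V' c ≠ 0 := by
    by_contra hn
    push_neg at hn
    have hdiff : DifferentiableOn ℝ V (Icc 0 L) :=
      fun x hx => (hV' x hx).differentiableWithinAt
    have hder : ∀ x ∈ Ico 0 L, derivWithin V (Icc 0 L) x = 0 := by
      intro x hx
      have hx' : x ∈ Icc 0 L := ⟨hx.1, hx.2.le⟩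
      rw [(hV' x hx').derivWithin (uniqueDiffOn_Icc hL x hx')]
      exact hn x hx'
    exact hVnc ⟨V 0, constant_of_derivWithin_zero hdiff hder⟩
  obtain ⟨c, hcmem, hc0⟩ := hcex
  have hc00 : c ≠ 0 := fun he => hc0 (he ▸ hN0)
  have hcL : c ≠ L := fun he => hc0 (he ▸ hNL)
  have hcIoo : c ∈ Ioo 0 L := ⟨lt_of_le_of_ne hcmem.1 (Ne.symm hc00), lt_of_le_of_ne hcmem.2 hcL⟩
  -- α : last zero of V' before c
  set Sα : Set ℝ := Icc 0 c ∩ V' ⁻¹' {0} with hSα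
  have hSαcl : IsClosed Sα :=
    (hV'c.mono (Icc_subset_Icc le_rfl hcmem.2)).preimage_isClosed_of_isClosed
      isClosed_Icc isClosed_singleton
  have hSαne : Sα.Nonempty := ⟨0, ⟨le_refl 0, hcIoo.1.le⟩, hN0⟩
  have hSαbdd : BddAbove Sα := ⟨c, fun v hv => hv.1.2⟩
  set α := sSup Sα with hα
  have hαmem : α ∈ Sα := hSαcl.csSup_mem hSαne hSαbdd
  have hα0 : V' α = 0 := hαmem.2
  have hα0' : 0 ≤ α := hαmem.1.1
  have hαc : α < c := lt_of_le_of_ne hαmem.1.2 (fun he => hc0 (he ▸ hα0))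
  have hαnz : ∀ x, α < x → x < c → V' x ≠ 0 := by
    intro x h1 h2 hz
    have : x ∈ Sα := ⟨⟨le_trans hα0' h1.le, h2.le⟩, hz⟩
    exact absurd (le_csSup hSαbdd this) (not_le.2 h1)
  -- β : first zero of V' after c
  set Sβ : Set ℝ := Icc c L ∩ V' ⁻¹' {0} with hSβ
  have hSβcl : IsClosed Sβ :=
    (hV'c.mono (Icc_subset_Icc hcmem.1 le_rfl)).preimage_isClosed_of_isClosed
      isClosed_Icc isClosed_singleton
  have hSβne : Sβ.Nonempty := ⟨L, ⟨hcIoo.2.le, le_refl L⟩, hNL⟩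
  have hSβbdd : BddBelow Sβ := ⟨c, fun v hv => hv.1.1⟩
  set β := sInf Sβ with hβ
  have hβmem : β ∈ Sβ := hSβcl.csInf_mem hSβne hSβbdd
  have hβ0 : V' β = 0 := hβmem.2
  have hβL : β ≤ L := hβmem.1.2
  have hcβ : c < β := lt_of_le_of_ne hβmem.1.1 (fun he => hc0 (he ▸ hβ0))
  have hβnz : ∀ x, c < x → x < β → V' x ≠ 0 := by
    intro x h1 h2 hz
    have : x ∈ Sβ := ⟨⟨h1.le, le_trans h2.le hβL⟩, hz⟩
    exact absurd (csInf_le hSβbdd this) (not_le.2 h2)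
  have hαβ : α < β := lt_trans hαc hcβ
  have hsubIcc : Icc α β ⊆ Icc 0 L := Icc_subset_Icc hα0' hβL
  have hsubIoo : Ioo α β ⊆ Ioo 0 L := fun x hx =>
    ⟨lt_of_le_of_lt hα0' hx.1, lt_of_lt_of_le hx.2 hβL⟩
  -- V' nonzero on (α, β)
  have hnz : ∀ x ∈ Ioo α β, V' x ≠ 0 := by
    intro x hx
    rcases lt_trichotomy x c with h1 | h1 | h1
    · exact hαnz x hx.1 h1
    · exact h1 ▸ hc0
    · exact hβnz x h1 hx.2
  -- V' has constant sign on (α, β)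
  have hsign : ∀ x ∈ Ioo α β, ∀ y ∈ Ioo α β, 0 < V' x → 0 < V' y := by
    intro x hx y hy hxpos
    by_contra hn
    have hyneg : V' y < 0 := lt_of_le_of_ne (not_lt.1 hn) (hnz y hy)
    rcases le_or_gt x y with hxy | hxy
    · have hsub : Icc x y ⊆ Ioo α β := fun z hz => ⟨lt_of_lt_of_le hx.1 hz.1, lt_of_le_of_lt hz.2 hy.2⟩
      have hcont : ContinuousOn V' (Icc x y) := hV'c.mono (fun z hz => Ioo_subset_Icc_self (hsubIoo (hsub hz)))
      obtain ⟨z, hz, hz0⟩ := intermediate_value_Icc' hxy hcont ⟨hyneg.le, hxpos.le⟩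
      exact hnz z (hsub hz) hz0
    · have hsub : Icc y x ⊆ Ioo α β := fun z hz => ⟨lt_of_lt_of_le hy.1 hz.1, lt_of_le_of_lt hz.2 hx.2⟩
      have hcont : ContinuousOn V' (Icc y x) := hV'c.mono (fun z hz => (Ioo_subset_Icc_self (hsubIoo (hsub hz))))
      obtain ⟨z, hz, hz0⟩ := intermediate_value_Icc hxy.le hcont ⟨hyneg.le, hxpos.le⟩
      exact hnz z (hsub hz) hz0
  have hcmemαβ : c ∈ Ioo α β := ⟨hαc, hcβ⟩
  have hVcontαβ : ContinuousOn V (Icc α β) := hVcont.mono hsubIcc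
  have hderivV : ∀ x ∈ Ioo α β, deriv V x = V' x := by
    intro x hx
    have hx' := hsubIoo hx
    exact ((hV' x (Ioo_subset_Icc_self hx')).hasDerivAt (Icc_mem_nhds hx'.1 hx'.2)).deriv
  have hαIcc : α ∈ Icc 0 L := ⟨hα0', le_trans hαβ.le hβL⟩
  have hβIcc : β ∈ Icc 0 L := ⟨le_trans hα0' hαβ.le, hβL⟩
  rcases (hc0.lt_or_gt) with hcneg | hcpos
  · -- V' < 0 on (α, β) : V decreasing, a = V β < b = V α
    have hneg : ∀ x ∈ Ioo α β, V' x < 0 := by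
      intro x hx
      by_contra hn
      have : 0 < V' x := lt_of_le_of_ne (not_lt.1 hn) (Ne.symm (hnz x hx))
      exact absurd (hsign x hx c hcmemαβ this) (not_lt.2 hcneg.le)
    have hanti : StrictAntiOn V (Icc α β) := by
      apply strictAntiOn_of_deriv_neg (convex_Icc α β) hVcontαβ
      intro x hx
      rw [interior_Icc] at hx
      rw [hderivV x hx]
      exact hneg x hx
    have hab : V β < V α := by
      have := hanti ⟨le_refl α, hαβ.le⟩ ⟨hαβ.le, le_refl β⟩ hαβ
      exact this
    -- h (V β) ≤ 0
    have hha : h (V β) ≤ 0 := by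
      by_contra hn
      push_neg at hn
      obtain ⟨s, hs, hsp⟩ := pushLeft h V V' V'' L hVcont hhc hV'c hV'' heq β α hβIcc hα0' hαβ hβ0 (ne_of_gt hn)
      have hsneg : V' s < 0 := hneg s hs
      nlinarith
    -- 0 ≤ h (V α)
    have hhb : 0 ≤ h (V α) := by
      by_contra hn
      push_neg at hn
      obtain ⟨s, hs, hsp⟩ := pushRight h V V' V'' L hVcont hhc hV'c hV'' heq α β hαIcc hβL hαβ hα0 (ne_of_lt hn)
      have hsneg : V' s < 0 := hneg s hs
      nlinarith
    obtain ⟨a₀, ha₀mem, ha₀z, ha₀d⟩ := signChange h hhc hhd (V β) (V α) hab hha hhb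
    obtain ⟨x₀, hx₀mem, hx₀⟩ := intermediate_value_Icc' hαβ.le hVcontαβ ha₀mem
    exact ⟨x₀, hsubIcc hx₀mem, a₀, hx₀, ha₀z, ha₀d⟩
  · -- V' > 0 on (α, β) : V increasing, a = V α < b = V β
    have hpos : ∀ x ∈ Ioo α β, 0 < V' x := fun x hx => hsign c hcmemαβ x hx hcpos
    have hmono : StrictMonoOn V (Icc α β) := by
      apply strictMonoOn_of_deriv_pos (convex_Icc α β) hVcontαβ
      intro x hx
      rw [interior_Icc] at hx
      rw [hderivV x hx]
      exact hpos x hx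
    have hab : V α < V β := hmono ⟨le_refl α, hαβ.le⟩ ⟨hαβ.le, le_refl β⟩ hαβ
    have hha : h (V α) ≤ 0 := by
      by_contra hn
      push_neg at hn
      obtain ⟨s, hs, hsp⟩ := pushRight h V V' V'' L hVcont hhc hV'c hV'' heq α β hαIcc hβL hαβ hα0 (ne_of_gt hn)
      have hspos : 0 < V' s := hpos s hs
      nlinarith
    have hhb : 0 ≤ h (V β) := by
      by_contra hn
      push_neg at hn
      obtain ⟨s, hs, hsp⟩ := pushLeft h V V' V'' L hVcont hhc hV'c hV'' heq β α hβIcc hα0' hαβ hβ0 (ne_of_lt hn)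
      have hspos : 0 < V' s := hpos s hs
      nlinarith
    obtain ⟨a₀, ha₀mem, ha₀z, ha₀d⟩ := signChange h hhc hhd (V α) (V β) hab hha hhb
    obtain ⟨x₀, hx₀mem, hx₀⟩ := intermediate_value_Icc hαβ.le hVcontαβ ha₀mem
    exact ⟨x₀, hsubIcc hx₀mem, a₀, hx₀, ha₀z, ha₀d⟩
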